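/- With B₀ the diagonal matrix having one eigenvalue ((n-2k)/(4k))·((k-n)/k)·h and n-1 eigenvalues ((n-2k)/(4k))·h, where h > 0 and 2 ≤ 2k < n, one has σ_k(B₀) = 0 and σ_j(B₀) > 0 for all 1 ≤ j ≤ k-1. -/

import Mathlib

lemma esymm_cons' {R : Type*} [CommSemiring R] (a : R) (s : Multiset R) (j : ℕ) :
    (a ::ₘ s).esymm (j+1) = s.esymm (j+1) + a * s.esymm j := by
  simp only [Multiset.esymm, Multiset.powersetCard_cons, Multiset.map_add, Multiset.sum_add,
    Multiset.map_map, Function.comp_def, Multiset.prod_cons]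
  rw [Multiset.sum_map_mul_left]

lemma esymm_replicate' {R : Type*} [CommSemiring R] (b : R) (m j : ℕ) :
    (Multiset.replicate m b).esymm j = (m.choose j : R) * b ^ j := by
  induction m generalizing j with
  | zero =>
    cases j with
    | zero => simp [Multiset.esymm]
    | succ j => simp [Multiset.esymm, Multiset.powersetCard_zero_right]
  | succ m ih =>
    cases j with
    | zero => simp [Multiset.esymm]
    | succ j =>
      rw [Multiset.replicate_succ, esymm_cons', ih, ih, Nat.choose_succ_succ]
      push_cast; ring

/-- The σ_k-Schwarzschild endomorphism B₀ satisfies σ_k(B₀) = 0 and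
σ_j(B₀) > 0 for 1 ≤ j ≤ k-1. -/
theorem stmt_4 (n k : ℕ) (h2 : 2 ≤ 2 * k) (hkn : 2 * k < n) (h : ℝ) (hh : 0 < h) :
    (((((n : ℝ) - 2 * k) / (4 * k)) * ((( k : ℝ) - n) / k) * h) ::ₘ
        Multiset.replicate (n - 1) ((((n : ℝ) - 2 * k) / (4 * k)) * h)).esymm k = 0
    ∧ ∀ j : ℕ, 1 ≤ j → j ≤ k - 1 →
        0 < (((((n : ℝ) - 2 * k) / (4 * k)) * ((( k : ℝ) - n) / k) * h) ::ₘ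
              Multiset.replicate (n - 1) ((((n : ℝ) - 2 * k) / (4 * k)) * h)).esymm j := by
  have hk1 : 1 ≤ k := by omega
  have hkR : (0:ℝ) < k := by exact_mod_cast hk1
  have hkn' : (2*k : ℝ) < n := by exact_mod_cast hkn
  set b : ℝ := (((n : ℝ) - 2 * k) / (4 * k)) * h with hbdef
  set a : ℝ := (((n : ℝ) - 2 * k) / (4 * k)) * ((( k : ℝ) - n) / k) * h with hadef
  have hb : 0 < b := by
    apply mul_pos _ hh
    apply div_pos (by linarith) (by linarith)
  have hab : a = b * ((( k : ℝ) - n) / k) := by rw [hadef, hbdef]; ring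
  have hform : ∀ i : ℕ,
      (a ::ₘ Multiset.replicate (n-1) b).esymm (i+1)
        = ((n-1).choose (i+1) : ℝ) * b^(i+1) + a * (((n-1).choose i : ℝ) * b^i) := by
    intro i
    rw [esymm_cons', esymm_replicate', esymm_replicate']
  -- key real identity for the choose ratio
  have hkey : ∀ i : ℕ, i + 1 < n →
      ((n-1).choose (i+1) : ℝ) * (i+1) = ((n-1).choose i : ℝ) * ((n:ℝ) - 1 - i) := by
    intro i hi
    have hnat := Nat.choose_succ_right_eq (n-1) i
    have hc : ((n-1-i : ℕ) : ℝ) = (n:ℝ) - 1 - i := by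
      have : ((n-1-i : ℕ) : ℝ) = ((n:ℕ):ℝ) - 1 - i := by
        push_cast [Nat.cast_sub (show 1 + i ≤ n by omega), Nat.sub_sub]; ring
      simpa using this
    calc ((n-1).choose (i+1) : ℝ) * (i+1)
        = (((n-1).choose (i+1) * (i+1) : ℕ) : ℝ) := by push_cast; ring
      _ = (((n-1).choose i * (n-1-i) : ℕ) : ℝ) := by rw [hnat]
      _ = ((n-1).choose i : ℝ) * ((n:ℝ) - 1 - i) := by push_cast [hc]; ring
  constructor
  · -- σ_k = 0
    obtain ⟨i, rfl⟩ : ∃ i, k = i + 1 := ⟨k - 1, by omega⟩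
    rw [hform]
    have hi : i + 1 < n := by omega
    have key := hkey i hi
    have hi1 : ((i:ℝ) + 1) ≠ 0 := by positivity
    have key2 : ((n-1).choose (i+1) : ℝ)
        = ((n-1).choose i : ℝ) * (((n:ℝ) - (i+1)) / (i+1)) := by
      rw [← mul_div_assoc, eq_div_iff hi1]
      linarith [key]
    rw [key2, hab]
    push_cast
    field_simp
    ring
  · intro j hj1 hjk
    obtain ⟨i, rfl⟩ : ∃ i, j = i + 1 := ⟨j - 1, by omega⟩
    have hik : i + 1 < k := by omega
    have hi : i + 1 < n := by omega
    rw [hform, hab]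
    have key := hkey i hi
    have hC0 : (0:ℝ) < ((n-1).choose i : ℝ) := by
      exact_mod_cast Nat.choose_pos (show i ≤ n - 1 by omega)
    have hikR : (i:ℝ) + 1 < k := by exact_mod_cast hik
    have hnR : (0:ℝ) < n := by linarith
    have hD : 0 < ((n-1).choose (i+1) : ℝ) * k + (((k:ℝ) - n)) * ((n-1).choose i : ℝ) := by
      have hexp : (((n-1).choose (i+1) : ℝ) * k + (((k:ℝ) - n)) * ((n-1).choose i : ℝ))
          * ((i:ℝ)+1) = ((n-1).choose i : ℝ) * ((n:ℝ) * ((k:ℝ) - (i+1))) := by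
        nlinarith [key]
      have hpos : 0 < ((n-1).choose i : ℝ) * ((n:ℝ) * ((k:ℝ) - (i+1))) := by
        apply mul_pos hC0 (mul_pos hnR (by linarith))
      nlinarith [hexp, hpos]
    have heq : ((n-1).choose (i+1) : ℝ) * b^(i+1)
          + b * (((k:ℝ) - n) / k) * (((n-1).choose i : ℝ) * b^i)
        = b^(i+1) * ((((n-1).choose (i+1) : ℝ) * k
            + (((k:ℝ) - n)) * ((n-1).choose i : ℝ)) / k) := by
      field_simp
      ring
    rw [heq]
    exact mul_pos (pow_pos hb _) (div_pos hD hkR)
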